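/- arXiv:1405.1653 — 4 statements merged into one kernel-verified Lean document; each statement's English description precedes it below -/
import Mathlib

section
/- For a finite sequence X = (x^(1),...,x^(n)) of points in [0,1)^d, the L2-star discrepancy satisfies Warnock's formula: (d*_2(X))^2 = 3^{-d} - (2^{1-d}/n) * Σ_{i=1}^n Π_{k=1}^d (1 - (x^(i)_k)^2) + (1/n^2) * Σ_{i=1}^n Σ_{j=1}^n Π_{k=1}^d min{1 - x^(i)_k, 1 - x^(j)_k}. -/
open MeasureTheory

/-- Factorization of an integral over the unit cube of a product of coordinate functions. -/
lemma warnock_prod_integral_Icc {d : ℕ} (f : Fin d → ℝ → ℝ) :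
    ∫ y in Set.Icc (0 : Fin d → ℝ) 1, ∏ k, f k (y k)
      = ∏ k, ∫ t in Set.Icc (0:ℝ) 1, f k t := by
  rw [← integral_indicator measurableSet_Icc]
  have h : ∀ y : Fin d → ℝ,
      (Set.Icc (0 : Fin d → ℝ) 1).indicator (fun y => ∏ k, f k (y k)) y
        = ∏ k, (Set.Icc (0:ℝ) 1).indicator (f k) (y k) := by
    intro y
    by_cases hy : y ∈ Set.Icc (0 : Fin d → ℝ) 1
    · rw [Set.indicator_of_mem hy]
      exact Finset.prod_congr rfl fun k _ =>
        (Set.indicator_of_mem (Set.mem_Icc.2 ⟨hy.1 k, hy.2 k⟩) _).symm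
    · rw [Set.indicator_of_notMem hy]
      have : ∃ k, y k ∉ Set.Icc (0:ℝ) 1 := by
        by_contra hc
        push_neg at hc
        exact hy (Set.mem_Icc.2 ⟨fun k => (Set.mem_Icc.1 (hc k)).1, fun k => (Set.mem_Icc.1 (hc k)).2⟩)
      obtain ⟨k, hk⟩ := this
      exact (Finset.prod_eq_zero (Finset.mem_univ k) (Set.indicator_of_notMem hk _)).symm
  simp_rw [h]
  rw [MeasureTheory.integral_fintype_prod_volume_eq_prod
    (f := fun k => (Set.Icc (0:ℝ) 1).indicator (f k))]
  simp_rw [integral_indicator measurableSet_Icc]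

/-- Integrability of products of bounded measurable coordinate functions on the cube. -/
lemma warnock_integrableOn_prod {d : ℕ} (f : Fin d → ℝ → ℝ)
    (hm : ∀ k, Measurable (f k)) (hb : ∀ k, ∀ t ∈ Set.Icc (0:ℝ) 1, |f k t| ≤ 1) :
    IntegrableOn (fun y : Fin d → ℝ => ∏ k, f k (y k)) (Set.Icc 0 1) := by
  have hmeas : Measurable (fun y : Fin d → ℝ => ∏ k, f k (y k)) :=
    Finset.measurable_prod _ fun k _ => (hm k).comp (measurable_pi_apply k)
  have hfin : volume (Set.Icc (0 : Fin d → ℝ) 1) < ⊤ := isCompact_Icc.measure_lt_top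
  refine Integrable.mono' (g := fun _ => (1:ℝ)) ?_ hmeas.aestronglyMeasurable ?_
  · exact integrableOn_const hfin.ne
  · filter_upwards [ae_restrict_mem measurableSet_Icc] with y hy
    calc ‖∏ k, f k (y k)‖ = |∏ k, f k (y k)| := rfl
      _ = ∏ k, |f k (y k)| := Finset.abs_prod _ _
      _ ≤ 1 := Finset.prod_le_one (fun k _ => abs_nonneg _)
            (fun k _ => hb k (y k) ⟨hy.1 k, hy.2 k⟩)

lemma warnock_int_sq : ∫ t in Set.Icc (0:ℝ) 1, t^2 = 1/3 := by
  rw [integral_Icc_eq_integral_Ioc, ← intervalIntegral.integral_of_le zero_le_one,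
    integral_pow]
  norm_num

lemma warnock_int_mul_ind {a : ℝ} (ha : a ∈ Set.Ico (0:ℝ) 1) :
    ∫ t in Set.Icc (0:ℝ) 1, t * (if a < t then (1:ℝ) else 0) = (1 - a^2)/2 := by
  have h : ∀ t : ℝ, t * (if a < t then (1:ℝ) else 0)
      = (Set.Ioi a).indicator (fun t => t) t := by
    intro t; by_cases h : a < t <;> simp [Set.indicator, h, Set.mem_Ioi]
  simp_rw [h]
  rw [integral_indicator measurableSet_Ioi, Measure.restrict_restrict measurableSet_Ioi]
  have hs : Set.Ioi a ∩ Set.Icc (0:ℝ) 1 = Set.Ioc a 1 := by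
    ext t
    simp only [Set.mem_inter_iff, Set.mem_Ioi, Set.mem_Icc, Set.mem_Ioc]
    constructor
    · rintro ⟨h1, _, h3⟩; exact ⟨h1, h3⟩
    · rintro ⟨h1, h2⟩; exact ⟨h1, le_of_lt (lt_of_le_of_lt ha.1 h1), h2⟩
  rw [hs, ← intervalIntegral.integral_of_le (le_of_lt ha.2), integral_id]
  ring

lemma warnock_int_ind_ind {a b : ℝ} (ha : a ∈ Set.Ico (0:ℝ) 1) (hb : b ∈ Set.Ico (0:ℝ) 1) :
    ∫ t in Set.Icc (0:ℝ) 1, (if a < t then (1:ℝ) else 0) * (if b < t then (1:ℝ) else 0)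
      = min (1 - a) (1 - b) := by
  have h : ∀ t : ℝ, (if a < t then (1:ℝ) else 0) * (if b < t then (1:ℝ) else 0)
      = (Set.Ioi (max a b)).indicator (fun _ => (1:ℝ)) t := by
    intro t
    by_cases h1 : a < t <;> by_cases h2 : b < t <;>
      simp [Set.indicator, Set.mem_Ioi, max_lt_iff, h1, h2]
  simp_rw [h]
  rw [integral_indicator measurableSet_Ioi, Measure.restrict_restrict measurableSet_Ioi]
  have hab : max a b ∈ Set.Ico (0:ℝ) 1 := ⟨le_max_of_le_left ha.1, max_lt ha.2 hb.2⟩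
  have hs : Set.Ioi (max a b) ∩ Set.Icc (0:ℝ) 1 = Set.Ioc (max a b) 1 := by
    ext t
    simp only [Set.mem_inter_iff, Set.mem_Ioi, Set.mem_Icc, Set.mem_Ioc]
    constructor
    · rintro ⟨h1, _, h3⟩; exact ⟨h1, h3⟩
    · rintro ⟨h1, h2⟩; exact ⟨h1, le_of_lt (lt_of_le_of_lt hab.1 h1), h2⟩
  rw [hs, ← intervalIntegral.integral_of_le (le_of_lt hab.2),
    intervalIntegral.integral_const, smul_eq_mul, mul_one]
  exact (min_sub_sub_left 1 a b).symm

/-- Warnock's formula for the squared L2-star discrepancy. -/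
theorem warnock_formula (d n : ℕ) (hn : 0 < n)
    (x : Fin n → Fin d → ℝ) (hx : ∀ i k, x i k ∈ Set.Ico (0:ℝ) 1) :
    (∫ y in Set.Icc (0 : Fin d → ℝ) 1,
      ((∏ k, y k) - (1 / n) * ∑ i, (if ∀ k, x i k ∈ Set.Ico 0 (y k) then (1:ℝ) else 0)) ^ 2)
    = (1/3 : ℝ) ^ d
      - (2 * (1/2 : ℝ) ^ d / n) * ∑ i, ∏ k, (1 - (x i k) ^ 2)
      + (1 / (n:ℝ) ^ 2) * ∑ i, ∑ j, ∏ k, min (1 - x i k) (1 - x j k) := by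
  classical
  have hn' : (n:ℝ) ≠ 0 := Nat.cast_ne_zero.2 hn.ne'
  set χ : Fin n → Fin d → ℝ → ℝ := fun i k t => if x i k < t then (1:ℝ) else 0 with hχ
  have hmχ : ∀ i k, Measurable (χ i k) := fun i k =>
    Measurable.ite measurableSet_Ioi measurable_const measurable_const
  have hbχ : ∀ i k t, |χ i k t| ≤ 1 := by
    intro i k t
    simp only [hχ]
    split <;> norm_num
  -- rewrite the indicator as a product
  have hind : ∀ (i : Fin n) (y : Fin d → ℝ),
      (if ∀ k, x i k ∈ Set.Ico 0 (y k) then (1:ℝ) else 0) = ∏ k, χ i k (y k) := by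
    intro i y
    simp only [hχ]
    by_cases h : ∀ k, x i k < y k
    · have h' : ∀ k, x i k ∈ Set.Ico 0 (y k) := fun k => Set.mem_Ico.2 ⟨(hx i k).1, h k⟩
      rw [if_pos h']
      exact (Finset.prod_eq_one fun k _ => if_pos (h k)).symm
    · have h' : ¬ ∀ k, x i k ∈ Set.Ico 0 (y k) := fun hc => h fun k => (Set.mem_Ico.1 (hc k)).2
      rw [if_neg h']
      push_neg at h
      obtain ⟨k, hk⟩ := h
      symm
      apply Finset.prod_eq_zero (Finset.mem_univ k)
      simp [not_lt.2 hk]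
  -- pointwise expansion of the square
  have key : ∀ y : Fin d → ℝ,
      ((∏ k, y k) - (1 / n) * ∑ i, (if ∀ k, x i k ∈ Set.Ico 0 (y k) then (1:ℝ) else 0)) ^ 2
      = (∏ k, (y k)^2)
        - (2/(n:ℝ)) * ∑ i, ∏ k, (y k * χ i k (y k))
        + (1/(n:ℝ)^2) * ∑ i, ∑ j, ∏ k, (χ i k (y k) * χ j k (y k)) := by
    intro y
    simp only [hind]
    have e1 : (∏ k, (y k)^2) = (∏ k, y k)^2 := by rw [Finset.prod_pow]
    have e2 : ∀ i : Fin n, ∏ k, (y k * χ i k (y k))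
        = (∏ k, y k) * ∏ k, χ i k (y k) := fun i => Finset.prod_mul_distrib
    have e3 : ∀ i j : Fin n, ∏ k, (χ i k (y k) * χ j k (y k))
        = (∏ k, χ i k (y k)) * ∏ k, χ j k (y k) := fun i j => Finset.prod_mul_distrib
    simp only [e1, e2, e3]
    rw [← Finset.mul_sum, ← Finset.sum_mul_sum]
    field_simp
    ring
  simp only [key]
  -- integrability of the three pieces
  have hA : IntegrableOn (fun y : Fin d → ℝ => ∏ k, (y k)^2) (Set.Icc 0 1) :=
    warnock_integrableOn_prod (fun _ t => t^2)
      (fun k => measurable_id.pow_const 2)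
      (fun k t ht => by rw [abs_of_nonneg (sq_nonneg t)]; nlinarith [ht.1, ht.2])
  have hB : ∀ i, IntegrableOn (fun y : Fin d → ℝ => ∏ k, (y k * χ i k (y k)))
      (Set.Icc 0 1) := fun i =>
    warnock_integrableOn_prod (fun k t => t * χ i k t)
      (fun k => measurable_id.mul (hmχ i k))
      (fun k t ht => by
        rw [abs_mul]
        calc |t| * |χ i k t| ≤ 1 * 1 :=
              mul_le_mul (abs_le.2 ⟨by linarith [ht.1], ht.2⟩) (hbχ i k t)
                (abs_nonneg _) zero_le_one
          _ = 1 := mul_one 1)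
  have hC : ∀ i j, IntegrableOn
      (fun y : Fin d → ℝ => ∏ k, (χ i k (y k) * χ j k (y k))) (Set.Icc 0 1) := fun i j =>
    warnock_integrableOn_prod (fun k t => χ i k t * χ j k t)
      (fun k => (hmχ i k).mul (hmχ j k))
      (fun k t ht => by
        rw [abs_mul]
        calc |χ i k t| * |χ j k t| ≤ 1 * 1 :=
              mul_le_mul (hbχ i k t) (hbχ j k t) (abs_nonneg _) zero_le_one
          _ = 1 := mul_one 1)
  have hB' : IntegrableOn (fun y : Fin d → ℝ =>
      (2/(n:ℝ)) * ∑ i, ∏ k, (y k * χ i k (y k))) (Set.Icc 0 1) :=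
    (integrable_finset_sum _ (fun i _ => hB i)).const_mul _
  have hC' : IntegrableOn (fun y : Fin d → ℝ =>
      (1/(n:ℝ)^2) * ∑ i, ∑ j, ∏ k, (χ i k (y k) * χ j k (y k))) (Set.Icc 0 1) :=
    (integrable_finset_sum _ (fun i _ =>
      integrable_finset_sum _ (fun j _ => hC i j))).const_mul _
  have hAB : IntegrableOn (fun y : Fin d → ℝ =>
      (∏ k, (y k)^2) - (2/(n:ℝ)) * ∑ i, ∏ k, (y k * χ i k (y k))) (Set.Icc 0 1) :=
    hA.sub hB'
  rw [integral_add hAB hC', integral_sub hA hB',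
    integral_const_mul, integral_const_mul,
    integral_finset_sum _ (fun i _ => hB i),
    integral_finset_sum _ (fun i _ => integrable_finset_sum _ (fun j _ => hC i j))]
  simp_rw [integral_finset_sum _ (fun j _ => hC _ j)]
  -- evaluate each integral
  have eA : ∫ y in Set.Icc (0 : Fin d → ℝ) 1, ∏ k, (y k)^2 = (1/3 : ℝ)^d := by
    rw [warnock_prod_integral_Icc (fun _ t => t^2)]
    simp [warnock_int_sq]
  have eB : ∀ i, ∫ y in Set.Icc (0 : Fin d → ℝ) 1, ∏ k, (y k * χ i k (y k))
      = (1/2 : ℝ)^d * ∏ k, (1 - (x i k)^2) := by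
    intro i
    rw [warnock_prod_integral_Icc (fun k t => t * χ i k t)]
    have : ∀ k : Fin d, ∫ t in Set.Icc (0:ℝ) 1, t * χ i k t = (1 - (x i k)^2)/2 :=
      fun k => warnock_int_mul_ind (hx i k)
    simp only [this]
    rw [Finset.prod_div_distrib, Finset.prod_const, Finset.card_univ, Fintype.card_fin,
      div_pow, one_pow]
    ring
  have eC : ∀ i j, ∫ y in Set.Icc (0 : Fin d → ℝ) 1, ∏ k, (χ i k (y k) * χ j k (y k))
      = ∏ k, min (1 - x i k) (1 - x j k) := by
    intro i j
    rw [warnock_prod_integral_Icc (fun k t => χ i k t * χ j k t)]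
    exact Finset.prod_congr rfl fun k _ => warnock_int_ind_ind (hx i k) (hx j k)
  simp only [eA, eB, eC]
  rw [← Finset.mul_sum]
  ring
end

section
/- Let X = (x^(1),...,x^(n)) be a sequence in [0,1)^d. Then d*_∞(X) = max{ max_{y ∈ Γ̄(X)} δ(y,X), max_{y ∈ Γ(X)} δ̄(y,X) }, where δ(y,X) = V_y - A(y,X)/n and δ̄(y,X) = Ā(y,X)/n - V_y. -/
/-- Volume of the anchored box `[0,y)`. -/
def boxVol {d : ℕ} (y : Fin d → ℝ) : ℝ := ∏ j, y j

/-- Number of points of `X` in the half-open box `[0,y)`. -/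
noncomputable def countOpen {n d : ℕ} (x : Fin n → Fin d → ℝ) (y : Fin d → ℝ) : ℕ :=
  (Finset.univ.filter fun i => ∀ j, x i j ∈ Set.Ico 0 (y j)).card

/-- Number of points of `X` in the closed box `[0,y]`. -/
noncomputable def countClosed {n d : ℕ} (x : Fin n → Fin d → ℝ) (y : Fin d → ℝ) : ℕ :=
  (Finset.univ.filter fun i => ∀ j, x i j ∈ Set.Icc 0 (y j)).card

lemma boxVol_nonneg {d : ℕ} {y : Fin d → ℝ} (h : ∀ j, 0 ≤ y j) : 0 ≤ boxVol y :=
  Finset.prod_nonneg fun j _ => h j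

lemma boxVol_le_one {d : ℕ} {y : Fin d → ℝ} (h0 : ∀ j, 0 ≤ y j) (h1 : ∀ j, y j ≤ 1) :
    boxVol y ≤ 1 :=
  Finset.prod_le_one (fun j _ => h0 j) (fun j _ => h1 j)

lemma countOpen_le {n d : ℕ} (x : Fin n → Fin d → ℝ) (y : Fin d → ℝ) :
    countOpen x y ≤ n := by
  classical
  have h := Finset.card_filter_le (Finset.univ : Finset (Fin n))
    (fun i => ∀ j, x i j ∈ Set.Ico 0 (y j))
  simpa [countOpen] using h

lemma countClosed_le {n d : ℕ} (x : Fin n → Fin d → ℝ) (y : Fin d → ℝ) :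
    countClosed x y ≤ n := by
  classical
  have h := Finset.card_filter_le (Finset.univ : Finset (Fin n))
    (fun i => ∀ j, x i j ∈ Set.Icc 0 (y j))
  simpa [countClosed] using h

/-- The star discrepancy is attained on the grids `Γ̄(X)` and `Γ(X)` induced by `X`:
`d*_∞(X) = max{max_{y∈Γ̄(X)} δ(y,X), max_{y∈Γ(X)} δ̄(y,X)}`. -/
theorem star_disc_grid (d n : ℕ) (hn : 0 < n)
    (x : Fin n → Fin d → ℝ) (hx : ∀ i j, x i j ∈ Set.Ico (0:ℝ) 1) :
    sSup {t : ℝ | ∃ y ∈ Set.Icc (0 : Fin d → ℝ) 1,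
        t = max (boxVol y - (countOpen x y : ℝ) / n)
                ((countClosed x y : ℝ) / n - boxVol y)}
    = max
      (sSup {t : ℝ | ∃ y : Fin d → ℝ, (∀ j, (∃ i, y j = x i j) ∨ y j = 1) ∧
          t = boxVol y - (countOpen x y : ℝ) / n})
      (sSup {t : ℝ | ∃ y : Fin d → ℝ, (∀ j, ∃ i, y j = x i j) ∧
          t = (countClosed x y : ℝ) / n - boxVol y}) := by
  have hx0 : ∀ i j, 0 ≤ x i j := fun i j => (hx i j).1
  have hx1 : ∀ i j, x i j < 1 := fun i j => (hx i j).2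
  have hnR : (0:ℝ) < n := by exact_mod_cast hn
  set L : Set ℝ := {t : ℝ | ∃ y ∈ Set.Icc (0 : Fin d → ℝ) 1,
        t = max (boxVol y - (countOpen x y : ℝ) / n)
                ((countClosed x y : ℝ) / n - boxVol y)} with hLdef
  set S1 : Set ℝ := {t : ℝ | ∃ y : Fin d → ℝ, (∀ j, (∃ i, y j = x i j) ∨ y j = 1) ∧
          t = boxVol y - (countOpen x y : ℝ) / n} with hS1def
  set S2 : Set ℝ := {t : ℝ | ∃ y : Fin d → ℝ, (∀ j, ∃ i, y j = x i j) ∧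
          t = (countClosed x y : ℝ) / n - boxVol y} with hS2def
  -- generic bounds
  have hCOnn : ∀ y : Fin d → ℝ, (0:ℝ) ≤ (countOpen x y : ℝ) / n :=
    fun y => div_nonneg (Nat.cast_nonneg _) hnR.le
  have hCCle : ∀ y : Fin d → ℝ, (countClosed x y : ℝ) / n ≤ 1 := by
    intro y
    rw [div_le_one hnR]
    exact_mod_cast countClosed_le x y
  -- boundedness of the three sets
  have bddL : BddAbove L := by
    refine ⟨1, fun t ht => ?_⟩
    obtain ⟨y, hy, rfl⟩ := ht
    refine max_le ?_ ?_
    · have : boxVol y ≤ 1 := boxVol_le_one (fun j => hy.1 j) (fun j => hy.2 j)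
      linarith [hCOnn y]
    · have : 0 ≤ boxVol y := boxVol_nonneg (fun j => hy.1 j)
      linarith [hCCle y]
  have bddS1 : BddAbove S1 := by
    refine ⟨1, fun t ht => ?_⟩
    obtain ⟨y, hy, rfl⟩ := ht
    have h0 : ∀ j, 0 ≤ y j := by
      intro j; rcases hy j with ⟨i, hi⟩ | h1
      · rw [hi]; exact hx0 i j
      · rw [h1]; exact zero_le_one
    have h1 : ∀ j, y j ≤ 1 := by
      intro j; rcases hy j with ⟨i, hi⟩ | h1
      · rw [hi]; exact (hx1 i j).le
      · rw [h1]
    have := boxVol_le_one h0 h1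
    linarith [hCOnn y]
  have bddS2 : BddAbove S2 := by
    refine ⟨1, fun t ht => ?_⟩
    obtain ⟨y, hy, rfl⟩ := ht
    have h0 : ∀ j, 0 ≤ y j := by
      intro j; obtain ⟨i, hi⟩ := hy j; rw [hi]; exact hx0 i j
    have := boxVol_nonneg h0
    linarith [hCCle y]
  -- nonemptiness
  have hLne : L.Nonempty := by
    refine ⟨_, ⟨0, ⟨le_refl _, fun j => zero_le_one⟩, rfl⟩⟩
  have hS1ne : S1.Nonempty := ⟨_, ⟨fun _ => 1, fun j => Or.inr rfl, rfl⟩⟩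
  have hS2ne : S2.Nonempty :=
    ⟨_, ⟨fun j => x ⟨0, hn⟩ j, fun j => ⟨⟨0, hn⟩, rfl⟩, rfl⟩⟩
  -- key fact: 0 ∈ upper reach of S1, via y = 1
  have hS1_zero : (0:ℝ) ≤ sSup S1 := by
    have hone : countOpen x (fun _ : Fin d => (1:ℝ)) = n := by
      have : (Finset.univ.filter fun i : Fin n => ∀ j, x i j ∈ Set.Ico (0:ℝ) 1)
          = Finset.univ := Finset.filter_true_of_mem (fun i _ => fun j => hx i j)
      simpa [countOpen] using congrArg Finset.card this
    have hmem : (boxVol (fun _ : Fin d => (1:ℝ)) - (countOpen x (fun _ : Fin d => (1:ℝ)) : ℝ) / n) ∈ S1 :=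
      ⟨fun _ => 1, fun j => Or.inr rfl, rfl⟩
    have hval : boxVol (fun _ : Fin d => (1:ℝ)) - (countOpen x (fun _ : Fin d => (1:ℝ)) : ℝ) / n = 0 := by
      rw [hone]
      simp [boxVol, div_self hnR.ne']
    have := le_csSup bddS1 hmem
    linarith [this, hval ▸ this]
  refine le_antisymm ?_ ?_
  · -- L ≤ max S1 S2
    refine csSup_le hLne ?_
    rintro t ⟨y, hy, rfl⟩
    refine max_le ?_ ?_
    · -- open part ≤ sSup S1
      refine le_trans ?_ (le_max_left _ _)
      -- define the rounded-up grid point z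
      have hneF : ∀ j : Fin d,
          (((insert (1:ℝ) (Finset.image (fun i => x i j) Finset.univ)).filter
            (fun γ => y j ≤ γ))).Nonempty :=
        fun j => ⟨1, Finset.mem_filter.mpr ⟨Finset.mem_insert_self _ _, hy.2 j⟩⟩
      set z : Fin d → ℝ := fun j =>
        (((insert (1:ℝ) (Finset.image (fun i => x i j) Finset.univ)).filter
          (fun γ => y j ≤ γ))).min' (hneF j) with hzdef
      have hz_mem : ∀ j, z j ∈ ((insert (1:ℝ) (Finset.image (fun i => x i j) Finset.univ)).filter
          (fun γ => y j ≤ γ)) := fun j => Finset.min'_mem _ (hneF j)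
      have hz_ge : ∀ j, y j ≤ z j := fun j => (Finset.mem_filter.mp (hz_mem j)).2
      have hz_min : ∀ j (c : ℝ), (∃ i, c = x i j) → y j ≤ c → z j ≤ c := by
        intro j c ⟨i, hi⟩ hyc
        refine Finset.min'_le _ _ (Finset.mem_filter.mpr ⟨?_, hyc⟩)
        exact Finset.mem_insert_of_mem (hi ▸ Finset.mem_image_of_mem _ (Finset.mem_univ i))
      have hz_grid : ∀ j, (∃ i, z j = x i j) ∨ z j = 1 := by
        intro j
        rcases Finset.mem_insert.mp (Finset.mem_filter.mp (hz_mem j)).1 with h | h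
        · exact Or.inr h
        · obtain ⟨i, _, hi⟩ := Finset.mem_image.mp h
          exact Or.inl ⟨i, hi.symm⟩
      have hcount : countOpen x z = countOpen x y := by
        unfold countOpen
        congr 1
        apply Finset.filter_congr
        intro i _
        simp only [Set.mem_Ico]
        constructor
        · intro h j
          refine ⟨hx0 i j, ?_⟩
          by_contra hcon
          push_neg at hcon
          exact absurd (hz_min j (x i j) ⟨i, rfl⟩ hcon) (not_le.mpr (h j).2)
        · intro h j
          exact ⟨hx0 i j, lt_of_lt_of_le (h j).2 (hz_ge j)⟩
      have hvol : boxVol y ≤ boxVol z :=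
        Finset.prod_le_prod (fun j _ => hy.1 j) (fun j _ => hz_ge j)
      calc boxVol y - (countOpen x y : ℝ) / n
          ≤ boxVol z - (countOpen x z : ℝ) / n := by rw [hcount]; linarith
        _ ≤ sSup S1 := le_csSup bddS1 ⟨z, hz_grid, rfl⟩
    · -- closed part
      by_cases hcase : ∀ j, ∃ i, x i j ≤ y j
      · refine le_trans ?_ (le_max_right _ _)
        have hneF : ∀ j : Fin d,
            ((Finset.image (fun i => x i j) Finset.univ).filter (fun γ => γ ≤ y j)).Nonempty := by
          intro j
          obtain ⟨i, hi⟩ := hcase j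
          exact ⟨x i j, Finset.mem_filter.mpr
            ⟨Finset.mem_image_of_mem _ (Finset.mem_univ i), hi⟩⟩
        set z : Fin d → ℝ := fun j =>
          ((Finset.image (fun i => x i j) Finset.univ).filter (fun γ => γ ≤ y j)).max' (hneF j)
          with hzdef
        have hz_mem : ∀ j, z j ∈ ((Finset.image (fun i => x i j) Finset.univ).filter
            (fun γ => γ ≤ y j)) := fun j => Finset.max'_mem _ (hneF j)
        have hz_le : ∀ j, z j ≤ y j := fun j => (Finset.mem_filter.mp (hz_mem j)).2
        have hz_max : ∀ j (i : Fin n), x i j ≤ y j → x i j ≤ z j := by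
          intro j i hij
          have hmemf : x i j ∈ ((Finset.image (fun i => x i j) Finset.univ).filter
              (fun γ => γ ≤ y j)) :=
            Finset.mem_filter.mpr ⟨Finset.mem_image_of_mem _ (Finset.mem_univ i), hij⟩
          exact Finset.le_max' _ _ hmemf
        have hz_grid : ∀ j, ∃ i, z j = x i j := by
          intro j
          obtain ⟨i, _, hi⟩ := Finset.mem_image.mp (Finset.mem_filter.mp (hz_mem j)).1
          exact ⟨i, hi.symm⟩
        have hz0 : ∀ j, 0 ≤ z j := by
          intro j; obtain ⟨i, hi⟩ := hz_grid j; rw [hi]; exact hx0 i j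
        have hcount : countClosed x z = countClosed x y := by
          unfold countClosed
          congr 1
          apply Finset.filter_congr
          intro i _
          simp only [Set.mem_Icc]
          constructor
          · intro h j
            exact ⟨hx0 i j, le_trans (h j).2 (hz_le j)⟩
          · intro h j
            exact ⟨hx0 i j, hz_max j i (h j).2⟩
        have hvol : boxVol z ≤ boxVol y :=
          Finset.prod_le_prod (fun j _ => hz0 j) (fun j _ => hz_le j)
        calc (countClosed x y : ℝ) / n - boxVol y
            ≤ (countClosed x z : ℝ) / n - boxVol z := by rw [hcount]; linarith
          _ ≤ sSup S2 := le_csSup bddS2 ⟨z, hz_grid, rfl⟩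
      · -- degenerate case: closed box contains no points
        push_neg at hcase
        obtain ⟨j0, hj0⟩ := hcase
        have hzero : countClosed x y = 0 := by
          unfold countClosed
          rw [Finset.card_eq_zero, Finset.filter_eq_empty_iff]
          intro i _ hall
          exact absurd (hall j0).2 (not_le.mpr (hj0 i))
        have : (countClosed x y : ℝ) / n - boxVol y ≤ 0 := by
          rw [hzero]
          simp only [Nat.cast_zero, zero_div, zero_sub, neg_nonpos]
          exact boxVol_nonneg (fun j => hy.1 j)
        exact le_trans this (le_trans hS1_zero (le_max_left _ _))
  · -- max S1 S2 ≤ L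
    refine max_le ?_ ?_
    · refine csSup_le hS1ne ?_
      rintro t ⟨y, hy, rfl⟩
      have h0 : ∀ j, 0 ≤ y j := by
        intro j; rcases hy j with ⟨i, hi⟩ | h1
        · rw [hi]; exact hx0 i j
        · rw [h1]; exact zero_le_one
      have h1 : ∀ j, y j ≤ 1 := by
        intro j; rcases hy j with ⟨i, hi⟩ | h1
        · rw [hi]; exact (hx1 i j).le
        · rw [h1]
      refine le_trans (le_max_left _ ((countClosed x y : ℝ) / n - boxVol y)) ?_
      exact le_csSup bddL ⟨y, ⟨fun j => h0 j, fun j => h1 j⟩, rfl⟩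
    · refine csSup_le hS2ne ?_
      rintro t ⟨y, hy, rfl⟩
      have h0 : ∀ j, 0 ≤ y j := by
        intro j; obtain ⟨i, hi⟩ := hy j; rw [hi]; exact hx0 i j
      have h1 : ∀ j, y j ≤ 1 := by
        intro j; obtain ⟨i, hi⟩ := hy j; rw [hi]; exact (hx1 i j).le
      refine le_trans (le_max_right (boxVol y - (countOpen x y : ℝ) / n) _) ?_
      exact le_csSup bddL ⟨y, ⟨fun j => h0 j, fun j => h1 j⟩, rfl⟩
end

section
/- Let G = (V,E) be a graph with vertex set V = {1,...,n}, and let α, β ∈ [0,1) with β < α^n. Define points x^(i) ∈ [0,1)^n for i = 1,...,n by x^(i)_j = α if {i,j} ∈ E or i = j, and x^(i)_j = β otherwise, and let X = (x^(1),...,x^(n)). Then for every m ∈ {1,...,n}: G has a dominating set M ⊆ V with |M| ≤ m if and only if there exists y ∈ Γ̄(X) with A(y,X) = 0 and V_y ≥ α^m. -/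
/-- The reduction from `Dominating Set` to `Empty Half-Open Box`: the graph `G` has a
dominating set of size at most `m` if and only if the derived point set admits an empty
anchored box with grid corner of volume at least `α^m`. -/
theorem dominating_set_iff_empty_box (n : ℕ) (hn : 0 < n) (G : SimpleGraph (Fin n))
    [DecidableRel G.Adj] (α β : ℝ) (hα : α ∈ Set.Ico (0:ℝ) 1) (hβ : β ∈ Set.Ico (0:ℝ) 1)
    (hβα : β < α ^ n) (m : ℕ) (hm1 : 1 ≤ m) (hm2 : m ≤ n)
    (x : Fin n → Fin n → ℝ)
    (hxdef : ∀ i j, x i j = if G.Adj i j ∨ i = j then α else β) :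
    (∃ M : Finset (Fin n), M.card ≤ m ∧ ∀ v, v ∉ M → ∃ w ∈ M, G.Adj v w)
    ↔ ∃ y : Fin n → ℝ,
        (∀ j, (∃ i, y j = x i j) ∨ y j = 1) ∧
        (∀ i, ¬ (∀ j, x i j ∈ Set.Ico 0 (y j))) ∧
        α ^ m ≤ ∏ j, y j := by
  classical
  obtain ⟨hα0, hα1⟩ := hα
  obtain ⟨hβ0, hβ1⟩ := hβ
  have hαpos : 0 < α := by
    rcases hα0.lt_or_eq with h | h
    · exact h
    · exfalso; rw [← h, zero_pow hn.ne'] at hβα; linarith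
  have hβα' : β < α := lt_of_lt_of_le hβα (pow_le_of_le_one hα0 hα1.le hn.ne')
  have hxval : ∀ i j, x i j = α ∨ x i j = β := by
    intro i j; rw [hxdef]; split
    · exact Or.inl rfl
    · exact Or.inr rfl
  constructor
  · rintro ⟨M, hMcard, hMdom⟩
    refine ⟨fun j => if j ∈ M then α else 1, ?_, ?_, ?_⟩
    · intro j
      by_cases hj : j ∈ M
      · exact Or.inl ⟨j, by simp [hj, hxdef]⟩
      · exact Or.inr (by simp [hj])
    · intro i hi
      by_cases hiM : i ∈ M
      · have := (hi i).2
        rw [hxdef] at this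
        simp [hiM] at this
      · obtain ⟨w, hwM, hadj⟩ := hMdom i hiM
        have := (hi w).2
        rw [hxdef] at this
        simp [hwM, hadj] at this
    · have heq : ∏ j, (if j ∈ M then α else (1:ℝ)) = α ^ M.card := by
        rw [Finset.prod_ite_mem, Finset.univ_inter, Finset.prod_const]
      rw [heq]
      exact pow_le_pow_of_le_one hα0 hα1.le hMcard
  · rintro ⟨y, hgrid, hempty, hvol⟩
    have hy01 : ∀ j, 0 ≤ y j ∧ y j ≤ 1 := by
      intro j
      rcases hgrid j with ⟨i, hi⟩ | h1
      · rw [hi, hxdef]; split <;> constructor <;> linarith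
      · rw [h1]; constructor <;> norm_num
    have hyval : ∀ j, y j = α ∨ y j = 1 := by
      intro j
      rcases hgrid j with ⟨i, hi⟩ | h1
      · rcases hxval i j with h | h
        · exact Or.inl (by rw [hi, h])
        · exfalso
          have hyj : y j = β := by rw [hi, h]
          have hle : ∏ k, y k ≤ ∏ k, (if k = j then β else (1:ℝ)) := by
            apply Finset.prod_le_prod
            · intro k _; exact (hy01 k).1
            · intro k _
              by_cases hk : k = j
              · subst hk; simp [hyj]
              · simp [hk, (hy01 k).2]
          have hprod : ∏ k, (if k = j then β else (1:ℝ)) = β := by simp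
          have h2 : α ^ n ≤ α ^ m := pow_le_pow_of_le_one hα0 hα1.le hm2
          rw [hprod] at hle
          linarith
      · exact Or.inr h1
    set M : Finset (Fin n) := Finset.univ.filter (fun j => y j = α) with hM
    have hyM : ∀ k, y k = if k ∈ M then α else 1 := by
      intro k
      rcases hyval k with h | h
      · simp [hM, Finset.mem_filter, h]
      · have hk : k ∉ M := by
          simp only [hM, Finset.mem_filter, Finset.mem_univ, true_and]
          rw [h]; intro hc; linarith
        simp [hk, h]
    have hprodM : ∏ k, y k = α ^ M.card := by
      rw [Finset.prod_congr rfl (fun k _ => hyM k), Finset.prod_ite_mem,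
        Finset.univ_inter, Finset.prod_const]
    refine ⟨M, ?_, ?_⟩
    · by_contra hc
      push_neg at hc
      have : α ^ M.card < α ^ m := pow_lt_pow_right_of_lt_one₀ hαpos hα1 hc
      rw [hprodM] at hvol
      linarith
    · intro v hv
      have := hempty v
      push_neg at this
      obtain ⟨j, hj⟩ := this
      have hx0 : 0 ≤ x v j := by rcases hxval v j with h | h <;> rw [h] <;> assumption
      have hyx : y j ≤ x v j := by
        by_contra hcc
        push_neg at hcc
        exact hj ⟨hx0, hcc⟩
      have hyjα : y j = α := by
        rcases hyval j with h | h
        · exact h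
        · exfalso
          rcases hxval v j with h' | h' <;> rw [h, h'] at hyx <;> linarith
      have hxα : x v j = α := by
        rcases hxval v j with h' | h'
        · exact h'
        · exfalso; rw [hyjα, h'] at hyx; linarith
      have hjM : j ∈ M := by simp [hM, Finset.mem_filter, hyjα]
      have hcond : G.Adj v j ∨ v = j := by
        by_contra hcc
        rw [hxdef, if_neg hcc] at hxα
        linarith
      rcases hcond with h | h
      · exact ⟨j, hjM, h⟩
      · exact absurd (h ▸ hjM) hv
end

section
/- Let p be an even positive integer, let γ_1 ≥ ... ≥ γ_d ≥ 0 with product weights γ_u = Π_{j∈u} γ_j, and let X = (x^(1),...,x^(n)) be a sequence in [0,1)^d. Then (d*_{p,γ}(X))^p = Σ_{ℓ=0}^p binom(p,ℓ) (-1/n)^ℓ Σ_{(i_1,...,i_ℓ) ∈ {1,...,n}^ℓ} Π_{j=1}^d ( 1 + γ_j · (1 - max_{1≤k≤ℓ} (x^(i_k)_j)^{p-ℓ+1}) / (p-ℓ+1) ), where for ℓ = 0 the inner max over an empty set is taken to be 0. -/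
open MeasureTheory Finset

lemma coord_integral {m : ℕ} (q : ℕ) (z : Fin m → ℝ) (hz : ∀ k, z k ∈ Set.Ico (0:ℝ) 1) :
    ∫ t in Set.Icc (0:ℝ) 1, (t ^ q * (if ∀ k, z k < t then (1:ℝ) else 0))
      = (1 - ⨆ k, (z k) ^ (q + 1)) / (q + 1) := by
  rcases Nat.eq_zero_or_pos m with h0 | hpos
  · subst h0
    simp only [IsEmpty.forall_iff, if_true, mul_one, Real.iSup_of_isEmpty]
    rw [MeasureTheory.integral_Icc_eq_integral_Ioc,
      ← intervalIntegral.integral_of_le (by norm_num : (0:ℝ) ≤ 1),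
      integral_pow]
    norm_num
  · have : Nonempty (Fin m) := ⟨⟨0, hpos⟩⟩
    obtain ⟨k0, hk0⟩ := exists_eq_ciSup_of_finite (f := z)
    set s := ⨆ k, z k with hs
    have hbdd : BddAbove (Set.range z) := Set.Finite.bddAbove (Set.finite_range z)
    have hle : ∀ k, z k ≤ s := fun k => le_ciSup hbdd k
    have hs0 : 0 ≤ s := hk0 ▸ (hz k0).1
    have hs1 : s < 1 := hk0 ▸ (hz k0).2
    have hiff : ∀ t : ℝ, (∀ k, z k < t) ↔ s < t := by
      intro t
      constructor
      · intro h; exact hk0 ▸ h k0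
      · intro h k; exact lt_of_le_of_lt (hle k) h
    have hrw : ∀ t : ℝ, (t ^ q * (if ∀ k, z k < t then (1:ℝ) else 0))
        = Set.indicator (Set.Ioi s) (fun t => t ^ q) t := by
      intro t
      by_cases h : s < t
      · rw [if_pos ((hiff t).2 h), Set.indicator_of_mem (Set.mem_Ioi.mpr h), mul_one]
      · rw [if_neg (fun hh => h ((hiff t).1 hh)), Set.indicator_of_notMem (by simpa using h), mul_zero]
    rw [show (fun t : ℝ => t ^ q * (if ∀ k, z k < t then (1:ℝ) else 0))
        = Set.indicator (Set.Ioi s) (fun t => t ^ q) from funext hrw]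
    rw [MeasureTheory.setIntegral_indicator measurableSet_Ioi]
    have hset : Set.Icc (0:ℝ) 1 ∩ Set.Ioi s = Set.Ioc s 1 := by
      ext t
      simp only [Set.mem_inter_iff, Set.mem_Icc, Set.mem_Ioi, Set.mem_Ioc]
      constructor
      · rintro ⟨⟨_, h1⟩, h2⟩; exact ⟨h2, h1⟩
      · rintro ⟨h1, h2⟩; exact ⟨⟨le_trans hs0 h1.le, h2⟩, h1⟩
    rw [hset, ← intervalIntegral.integral_of_le hs1.le, integral_pow]
    have hsup : (⨆ k, z k ^ (q + 1)) = s ^ (q + 1) := by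
      apply le_antisymm
      · exact ciSup_le fun k => pow_le_pow_left₀ ((hz k).1) (hle k) _
      · calc s ^ (q + 1) = z k0 ^ (q + 1) := by rw [hk0]
          _ ≤ _ := le_ciSup (f := fun k => z k ^ (q + 1))
            (Set.Finite.bddAbove (Set.finite_range _)) k0
    rw [hsup]
    norm_num

lemma cube_integral_prod (d : ℕ) (g : Fin d → ℝ → ℝ) :
    ∫ y in Set.Icc (0:Fin d → ℝ) 1, ∏ j, g j (y j)
      = ∏ j, ∫ t in Set.Icc (0:ℝ) 1, g j t := by
  rw [← Set.pi_univ_Icc,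
    ← MeasureTheory.integral_indicator (MeasurableSet.univ_pi fun _ => measurableSet_Icc)]
  simp only [Pi.zero_apply, Pi.one_apply]
  have hpt : (Set.pi Set.univ fun _ : Fin d => Set.Icc (0:ℝ) 1).indicator
      (fun y : Fin d → ℝ => ∏ j, g j (y j))
      = fun y => ∏ j, (Set.Icc (0:ℝ) 1).indicator (g j) (y j) := by
    funext y
    by_cases hy : y ∈ Set.pi Set.univ fun _ : Fin d => Set.Icc (0:ℝ) 1
    · rw [Set.indicator_of_mem hy]
      exact Finset.prod_congr rfl fun j _ =>
        (Set.indicator_of_mem (hy j trivial) _).symm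
    · rw [Set.indicator_of_notMem hy]
      rw [Set.mem_univ_pi] at hy
      push_neg at hy
      obtain ⟨j, hj⟩ := hy
      exact (Finset.prod_eq_zero (Finset.mem_univ j)
        (Set.indicator_of_notMem hj _)).symm
  rw [hpt, MeasureTheory.integral_fintype_prod_volume_eq_prod
    (fun j => (Set.Icc (0:ℝ) 1).indicator (g j))]
  exact Finset.prod_congr rfl fun j _ =>
    MeasureTheory.integral_indicator measurableSet_Icc

lemma boole_swap {α β : Type*} [Fintype α] (s : Finset β) (P : α → β → Prop)
    [∀ a b, Decidable (P a b)] [∀ a, Decidable (∀ b ∈ s, P a b)]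
    [∀ b, Decidable (∀ a, P a b)] :
    (∏ a, if ∀ b ∈ s, P a b then (1:ℝ) else 0)
      = ∏ b ∈ s, if ∀ a, P a b then (1:ℝ) else 0 := by
  by_cases h : ∀ a, ∀ b ∈ s, P a b
  · rw [Finset.prod_eq_one fun a _ => if_pos (h a),
      Finset.prod_eq_one fun b hb => if_pos fun a => h a b hb]
  · obtain ⟨a, ha⟩ := not_forall.1 h
    rw [Finset.prod_eq_zero (f := fun a => if ∀ b ∈ s, P a b then (1:ℝ) else 0)
      (Finset.mem_univ a) (if_neg ha)]
    have : ∃ b ∈ s, ¬ P a b := by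
      by_contra hc
      push_neg at hc
      exact ha hc
    obtain ⟨b, hb, hP⟩ := this
    exact (Finset.prod_eq_zero (f := fun b => if ∀ a, P a b then (1:ℝ) else 0)
      hb (if_neg fun hall => hP (hall a))).symm

lemma lp_pointwise (d n p : ℕ) (x : Fin n → Fin d → ℝ) (hx0 : ∀ i k, 0 ≤ x i k)
    (u : Finset (Fin d)) (y : Fin d → ℝ) :
    ((∏ j ∈ u, y j)
        - (1 / n) * ∑ i, (if ∀ j ∈ u, x i j ∈ Set.Ico 0 (y j) then (1:ℝ) else 0)) ^ p
    = ∑ ℓ ∈ Finset.range (p + 1), ∑ ι : Fin ℓ → Fin n,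
        (p.choose ℓ : ℝ) * (-(1 / n)) ^ ℓ *
          ∏ j, (if j ∈ u then
            (y j) ^ (p - ℓ) * (if ∀ k, x (ι k) j < y j then (1:ℝ) else 0) else 1) := by
  have hind : ∀ i, (if ∀ j ∈ u, x i j ∈ Set.Ico 0 (y j) then (1:ℝ) else 0)
      = if ∀ j ∈ u, x i j < y j then 1 else 0 := by
    intro i
    refine if_congr (forall₂_congr fun j _ => ?_) rfl rfl
    simp [Set.mem_Ico, hx0 i j]
  simp only [hind]
  rw [sub_eq_neg_add, ← neg_mul, add_pow]
  refine Finset.sum_congr rfl fun ℓ hℓ => ?_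
  rw [mul_pow, Fintype.sum_pow, Finset.mul_sum, Finset.sum_mul, Finset.sum_mul]
  refine Finset.sum_congr rfl fun ι _ => ?_
  have hprod : (∏ k, (if ∀ j ∈ u, x (ι k) j < y j then (1:ℝ) else 0))
      * (∏ j ∈ u, y j) ^ (p - ℓ)
      = ∏ j, (if j ∈ u then
          (y j) ^ (p - ℓ) * (if ∀ k, x (ι k) j < y j then (1:ℝ) else 0) else 1) := by
    have h1 : (∏ k, (if ∀ j ∈ u, x (ι k) j < y j then (1:ℝ) else 0))
        = ∏ j ∈ u, (if ∀ k, x (ι k) j < y j then (1:ℝ) else 0) :=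
      boole_swap u (fun k j => x (ι k) j < y j)
    rw [h1, ← Finset.prod_pow, ← Finset.prod_mul_distrib]
    rw [show (∏ j, (if j ∈ u then
          (y j) ^ (p - ℓ) * (if ∀ k, x (ι k) j < y j then (1:ℝ) else 0) else 1))
        = ∏ j ∈ Finset.univ ∩ u, (y j) ^ (p - ℓ) * (if ∀ k, x (ι k) j < y j then (1:ℝ) else 0)
        from Finset.prod_ite_mem _ _ _]
    rw [Finset.univ_inter]
    exact Finset.prod_congr rfl fun j _ => by rw [mul_comm]
  rw [← hprod]
  ring

lemma per_u (d n p : ℕ) (x : Fin n → Fin d → ℝ)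
    (hx : ∀ i k, x i k ∈ Set.Ico (0:ℝ) 1) (u : Finset (Fin d)) :
    ∫ y in Set.Icc (0 : Fin d → ℝ) 1,
        ((∏ j ∈ u, y j)
          - (1 / n) * ∑ i, (if ∀ j ∈ u, x i j ∈ Set.Ico 0 (y j) then (1:ℝ) else 0)) ^ p
    = ∑ ℓ ∈ Finset.range (p + 1), ∑ ι : Fin ℓ → Fin n,
        (p.choose ℓ : ℝ) * (-(1 / n)) ^ ℓ *
          ∏ j, (if j ∈ u then
            (1 - ⨆ k : Fin ℓ, (x (ι k) j) ^ (p - ℓ + 1)) / ((p - ℓ : ℕ) + 1) else 1) := by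
  have hSfin : volume (Set.Icc (0 : Fin d → ℝ) 1) ≠ ⊤ := by
    rw [← Set.pi_univ_Icc, volume_pi_pi]
    simp [Real.volume_Icc]
  set G : (ℓ : ℕ) → (Fin ℓ → Fin n) → Fin d → ℝ → ℝ := fun ℓ ι j t =>
    if j ∈ u then t ^ (p - ℓ) * (if ∀ k, x (ι k) j < t then (1:ℝ) else 0) else 1 with hG
  have hmeasG : ∀ ℓ (ι : Fin ℓ → Fin n) (j : Fin d), Measurable (G ℓ ι j) := by
    intro ℓ ι j
    rw [hG]
    by_cases hj : j ∈ u
    · simp only [if_pos hj]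
      apply Measurable.mul
      · exact measurable_id.pow_const _
      · have hset : MeasurableSet {t : ℝ | ∀ k, x (ι k) j < t} := by
          have : {t : ℝ | ∀ k, x (ι k) j < t} = ⋂ k, Set.Ioi (x (ι k) j) := by
            ext t; simp [Set.mem_iInter]
          rw [this]
          exact MeasurableSet.iInter fun k => measurableSet_Ioi
        exact Measurable.ite hset measurable_const measurable_const
    · simp only [if_neg hj]
      exact measurable_const
  have hint : ∀ ℓ (ι : Fin ℓ → Fin n),
      IntegrableOn (fun y : Fin d → ℝ => ∏ j, G ℓ ι j (y j))
        (Set.Icc (0 : Fin d → ℝ) 1) volume := by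
    intro ℓ ι
    apply Measure.integrableOn_of_bounded (M := 1) hSfin
    · exact (Finset.measurable_prod Finset.univ fun j _ =>
        (hmeasG ℓ ι j).comp (measurable_pi_apply j)).aestronglyMeasurable
    · filter_upwards [ae_restrict_mem measurableSet_Icc] with y hy
      rw [Real.norm_eq_abs, Finset.abs_prod]
      apply Finset.prod_le_one (fun j _ => abs_nonneg _)
      intro j _
      have hyj : (0:ℝ) ≤ y j ∧ y j ≤ 1 := ⟨hy.1 j, hy.2 j⟩
      rw [hG]
      by_cases hj : j ∈ u
      · simp only [if_pos hj]
        rw [abs_mul, abs_pow, abs_of_nonneg hyj.1]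
        have h1 : (y j) ^ (p - ℓ) ≤ 1 := pow_le_one₀ hyj.1 hyj.2
        have h2 : |if ∀ k, x (ι k) j < y j then (1:ℝ) else 0| ≤ 1 := by
          split <;> simp
        calc (y j) ^ (p - ℓ) * |if ∀ k, x (ι k) j < y j then (1:ℝ) else 0|
            ≤ 1 * 1 := mul_le_mul h1 h2 (abs_nonneg _) zero_le_one
          _ = 1 := by ring
      · simp [if_neg hj]
  calc ∫ y in Set.Icc (0 : Fin d → ℝ) 1, ((∏ j ∈ u, y j)
          - (1 / n) * ∑ i, (if ∀ j ∈ u, x i j ∈ Set.Ico 0 (y j) then (1:ℝ) else 0)) ^ p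
      = ∫ y in Set.Icc (0 : Fin d → ℝ) 1, ∑ ℓ ∈ Finset.range (p + 1),
          ∑ ι : Fin ℓ → Fin n,
          (p.choose ℓ : ℝ) * (-(1 / n)) ^ ℓ * ∏ j, G ℓ ι j (y j) :=
        integral_congr_ae (Filter.Eventually.of_forall fun y =>
          lp_pointwise d n p x (fun i k => (hx i k).1) u y)
    _ = ∑ ℓ ∈ Finset.range (p + 1), ∑ ι : Fin ℓ → Fin n,
          ∫ y in Set.Icc (0 : Fin d → ℝ) 1,
            (p.choose ℓ : ℝ) * (-(1 / n)) ^ ℓ * ∏ j, G ℓ ι j (y j) := by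
        rw [integral_finset_sum _ fun ℓ _ => integrable_finset_sum _ fun ι _ =>
          ((hint ℓ ι).const_mul _)]
        exact Finset.sum_congr rfl fun ℓ _ =>
          integral_finset_sum _ fun ι _ => ((hint ℓ ι).const_mul _)
    _ = ∑ ℓ ∈ Finset.range (p + 1), ∑ ι : Fin ℓ → Fin n,
          (p.choose ℓ : ℝ) * (-(1 / n)) ^ ℓ *
            ∏ j, ∫ t in Set.Icc (0:ℝ) 1, G ℓ ι j t := by
        refine Finset.sum_congr rfl fun ℓ _ => Finset.sum_congr rfl fun ι _ => ?_
        rw [integral_const_mul, cube_integral_prod]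
    _ = _ := by
        refine Finset.sum_congr rfl fun ℓ _ => Finset.sum_congr rfl fun ι _ => ?_
        congr 1
        refine Finset.prod_congr rfl fun j _ => ?_
        rw [hG]
        by_cases hj : j ∈ u
        · simp only [if_pos hj]
          exact coord_integral (p - ℓ) (fun k => x (ι k) j) (fun k => hx (ι k) j)
        · simp only [if_neg hj]
          rw [MeasureTheory.setIntegral_const]
          simp [Real.volume_Icc]

/-- The Leobacher–Pillichshammer formula for the weighted `L_p`-star discrepancy with
product weights, for even positive integers `p`. -/
theorem leobacher_pillichshammer (d n p : ℕ) (hn : 0 < n)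
    (hp : Even p) (hppos : 0 < p)
    (γ : Fin d → ℝ) (hγmono : Antitone γ) (hγ0 : ∀ j, 0 ≤ γ j)
    (x : Fin n → Fin d → ℝ) (hx : ∀ i k, x i k ∈ Set.Ico (0:ℝ) 1) :
    (∑ u ∈ (Finset.univ : Finset (Fin d)).powerset.erase ∅,
      (∏ j ∈ u, γ j) *
        ∫ y in Set.Icc (0 : Fin d → ℝ) 1,
          ((∏ j ∈ u, y j)
            - (1 / n) * ∑ i, (if ∀ j ∈ u, x i j ∈ Set.Ico 0 (y j) then (1:ℝ) else 0)) ^ p)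
    = ∑ ℓ ∈ Finset.range (p + 1), (p.choose ℓ : ℝ) * (-(1 / n)) ^ ℓ *
        ∑ ι : Fin ℓ → Fin n, ∏ j,
          (1 + γ j * (1 - ⨆ k : Fin ℓ, (x (ι k) j) ^ (p - ℓ + 1)) / (p - ℓ + 1)) := by
  set E := (Finset.univ : Finset (Fin d)).powerset.erase ∅ with hE
  set C : (ℓ : ℕ) → (Fin ℓ → Fin n) → Fin d → ℝ := fun ℓ ι j =>
    (1 - ⨆ k : Fin ℓ, (x (ι k) j) ^ (p - ℓ + 1)) / ((p - ℓ : ℕ) + 1) with hC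
  set c : ℕ → ℝ := fun ℓ => (p.choose ℓ : ℝ) * (-(1 / n)) ^ ℓ with hc
  calc (∑ u ∈ E, (∏ j ∈ u, γ j) *
        ∫ y in Set.Icc (0 : Fin d → ℝ) 1,
          ((∏ j ∈ u, y j)
            - (1 / n) * ∑ i, (if ∀ j ∈ u, x i j ∈ Set.Ico 0 (y j) then (1:ℝ) else 0)) ^ p)
      = ∑ u ∈ E, ∑ ℓ ∈ Finset.range (p + 1), ∑ ι : Fin ℓ → Fin n,
          c ℓ * ∏ j ∈ u, (γ j * C ℓ ι j) := by
        refine Finset.sum_congr rfl fun u hu => ?_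
        rw [per_u d n p x hx u, Finset.mul_sum]
        refine Finset.sum_congr rfl fun ℓ _ => ?_
        rw [Finset.mul_sum]
        refine Finset.sum_congr rfl fun ι _ => ?_
        rw [show (∏ j, (if j ∈ u then
              (1 - ⨆ k : Fin ℓ, (x (ι k) j) ^ (p - ℓ + 1)) / ((p - ℓ : ℕ) + 1) else 1))
            = ∏ j ∈ Finset.univ ∩ u, C ℓ ι j from Finset.prod_ite_mem _ _ _,
          Finset.univ_inter, mul_left_comm, Finset.prod_mul_distrib]
    _ = ∑ ℓ ∈ Finset.range (p + 1), ∑ ι : Fin ℓ → Fin n,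
          c ℓ * ((∏ j, (1 + γ j * C ℓ ι j)) - 1) := by
        rw [Finset.sum_comm]
        refine Finset.sum_congr rfl fun ℓ _ => ?_
        rw [Finset.sum_comm]
        refine Finset.sum_congr rfl fun ι _ => ?_
        rw [← Finset.mul_sum]
        congr 1
        have htot : ∑ u ∈ (Finset.univ : Finset (Fin d)).powerset,
            ∏ j ∈ u, (γ j * C ℓ ι j) = ∏ j, (1 + γ j * C ℓ ι j) := by
          rw [show (fun j => 1 + γ j * C ℓ ι j) = fun j => (γ j * C ℓ ι j) + 1 from
            funext fun j => add_comm _ _]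
          rw [Finset.prod_add]
          simp
        have := Finset.add_sum_erase ((Finset.univ : Finset (Fin d)).powerset)
          (fun u => ∏ j ∈ u, (γ j * C ℓ ι j)) (Finset.empty_mem_powerset _)
        simp only [Finset.prod_empty] at this
        rw [hE]
        linarith [htot, this]
    _ = (∑ ℓ ∈ Finset.range (p + 1), ∑ ι : Fin ℓ → Fin n,
          c ℓ * ∏ j, (1 + γ j * C ℓ ι j))
        - ∑ ℓ ∈ Finset.range (p + 1), ∑ ι : Fin ℓ → Fin n, c ℓ := by
        rw [← Finset.sum_sub_distrib]
        refine Finset.sum_congr rfl fun ℓ _ => ?_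
        rw [← Finset.sum_sub_distrib]
        exact Finset.sum_congr rfl fun ι _ => by ring
    _ = ∑ ℓ ∈ Finset.range (p + 1), (p.choose ℓ : ℝ) * (-(1 / n)) ^ ℓ *
        ∑ ι : Fin ℓ → Fin n, ∏ j,
          (1 + γ j * (1 - ⨆ k : Fin ℓ, (x (ι k) j) ^ (p - ℓ + 1)) / (p - ℓ + 1)) := by
        have hzero : ∑ ℓ ∈ Finset.range (p + 1), ∑ ι : Fin ℓ → Fin n, c ℓ = 0 := by
          have hn' : (n : ℝ) ≠ 0 := Nat.cast_ne_zero.mpr hn.ne'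
          have hcard : ∀ ℓ : ℕ, (Finset.univ : Finset (Fin ℓ → Fin n)).card = n ^ ℓ := by
            intro ℓ; simp [Fintype.card_fun]
          have : ∀ ℓ ∈ Finset.range (p + 1),
              (∑ ι : Fin ℓ → Fin n, c ℓ) = (p.choose ℓ : ℝ) * (-1) ^ ℓ := by
            intro ℓ _
            rw [Finset.sum_const, hcard ℓ, nsmul_eq_mul, hc]
            push_cast
            rw [mul_comm, mul_assoc, ← mul_pow]
            congr 2
            field_simp
          rw [Finset.sum_congr rfl this]
          have := add_pow (-1 : ℝ) 1 p
          simp only [neg_add_cancel, one_pow, mul_one] at this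
          rw [zero_pow hppos.ne'] at this
          rw [show (∑ ℓ ∈ Finset.range (p + 1), (p.choose ℓ : ℝ) * (-1) ^ ℓ)
              = ∑ ℓ ∈ Finset.range (p + 1), (-1:ℝ) ^ ℓ * (p.choose ℓ) from
            Finset.sum_congr rfl fun ℓ _ => by ring]
          exact this.symm
        rw [hzero, sub_zero]
        refine Finset.sum_congr rfl fun ℓ hℓ => ?_
        have hℓp : ℓ ≤ p := Nat.lt_succ_iff.mp (Finset.mem_range.mp hℓ)
        rw [← Finset.mul_sum]
        simp only [hc, hC]
        congr 1
        refine Finset.sum_congr rfl fun ι _ => Finset.prod_congr rfl fun j _ => ?_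
        rw [Nat.cast_sub hℓp, mul_div_assoc]
end
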